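/- Under the substitution z = v/(1+v+v²), the Grand Motzkin generating function G (with G(0)=1 and G²(1-2z-3z²)=1) becomes (1+v+v²)/(1-v²): that is, in ℚ[[v]], G(v/(1+v+v²)) = (1+v+v²)·(1-v²)⁻¹. -/

import Mathlib

open PowerSeries

/-- Composition g ∘ f of formal power series (meaningful when constantCoeff f = 0). -/
noncomputable def psComp (g f : PowerSeries ℚ) : PowerSeries ℚ :=
  PowerSeries.mk fun n =>
    ∑ k ∈ Finset.range (n + 1), (coeff (R := ℚ) k g) * (coeff (R := ℚ) n (f ^ k))

lemma coeff_pow_of_lt {f : PowerSeries ℚ} (hf : constantCoeff (R := ℚ) f = 0)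
    {k n : ℕ} (h : n < k) : coeff (R := ℚ) n (f ^ k) = 0 := by
  have hd : (X : PowerSeries ℚ) ^ k ∣ f ^ k :=
    pow_dvd_pow_of_dvd (PowerSeries.X_dvd_iff.mpr hf) k
  exact (PowerSeries.X_pow_dvd_iff.mp hd) n h

lemma key_eval₂ {f : PowerSeries ℚ} (hf : constantCoeff (R := ℚ) f = 0)
    (p : Polynomial ℚ) (n : ℕ) :
    coeff (R := ℚ) n (p.eval₂ (C (R := ℚ)) f) =
      ∑ k ∈ Finset.range (n + 1), p.coeff k * coeff (R := ℚ) n (f ^ k) := by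
  rw [Polynomial.eval₂_eq_sum_range, map_sum]
  simp only [coeff_C_mul]
  set d := p.natDegree with hd
  have h1 : ∑ i ∈ Finset.range (d + 1), p.coeff i * coeff (R := ℚ) n (f ^ i)
      = ∑ i ∈ Finset.range (d + n + 2), p.coeff i * coeff (R := ℚ) n (f ^ i) := by
    apply Finset.sum_subset (Finset.range_subset_range.mpr (by omega))
    intro i _ hi
    rw [Finset.mem_range, not_lt] at hi
    rw [Polynomial.coeff_eq_zero_of_natDegree_lt (by omega), zero_mul]
  have h2 : ∑ i ∈ Finset.range (n + 1), p.coeff i * coeff (R := ℚ) n (f ^ i)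
      = ∑ i ∈ Finset.range (d + n + 2), p.coeff i * coeff (R := ℚ) n (f ^ i) := by
    apply Finset.sum_subset (Finset.range_subset_range.mpr (by omega))
    intro i _ hi
    rw [Finset.mem_range, not_lt] at hi
    rw [coeff_pow_of_lt hf (by omega), mul_zero]
  rw [h1, h2]

lemma coeff_psComp {f : PowerSeries ℚ} (hf : constantCoeff (R := ℚ) f = 0)
    (g : PowerSeries ℚ) {m n : ℕ} (h : m ≤ n) :
    coeff (R := ℚ) m (psComp g f) = coeff (R := ℚ) m ((trunc (n + 1) g).eval₂ (C (R := ℚ)) f) := by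
  rw [key_eval₂ hf, psComp, coeff_mk]
  apply Finset.sum_congr rfl
  intro k hk
  rw [Finset.mem_range] at hk
  rw [coeff_trunc, if_pos (by omega)]

lemma psComp_mul {f : PowerSeries ℚ} (hf : constantCoeff (R := ℚ) f = 0)
    (g h : PowerSeries ℚ) :
    psComp (g * h) f = psComp g f * psComp h f := by
  ext n
  rw [coeff_psComp hf _ (le_refl n)]
  have hcoeff : ∀ k ≤ n, (trunc (n + 1) (g * h)).coeff k
      = (trunc (n + 1) g * trunc (n + 1) h).coeff k := by
    intro k hk
    rw [coeff_trunc, if_pos (by omega),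
      coeff_mul_eq_coeff_trunc_mul_trunc g h (show k < n + 1 by omega),
      ← Polynomial.coe_mul, Polynomial.coeff_coe]
  have heq : coeff (R := ℚ) n ((trunc (n + 1) (g * h)).eval₂ (C (R := ℚ)) f)
      = coeff (R := ℚ) n ((trunc (n + 1) g * trunc (n + 1) h).eval₂ (C (R := ℚ)) f) := by
    rw [key_eval₂ hf, key_eval₂ hf]
    apply Finset.sum_congr rfl
    intro k hk
    rw [Finset.mem_range] at hk
    rw [hcoeff k (by omega)]
  rw [heq, Polynomial.eval₂_mul, coeff_mul, coeff_mul]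
  apply Finset.sum_congr rfl
  intro p hp
  rw [Finset.HasAntidiagonal.mem_antidiagonal] at hp
  rw [coeff_psComp hf g (show p.1 ≤ n by omega),
    coeff_psComp hf h (show p.2 ≤ n by omega)]

lemma psComp_one (f : PowerSeries ℚ) : psComp 1 f = 1 := by
  ext n
  rw [psComp, coeff_mk]
  rw [Finset.sum_eq_single 0]
  · simp
  · intro k _ hk
    rw [coeff_one, if_neg hk, zero_mul]
  · intro h
    exact absurd (Finset.mem_range.mpr (by omega)) h

lemma psComp_add (f g h : PowerSeries ℚ) :
    psComp (g + h) f = psComp g f + psComp h f := by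
  ext n
  simp [psComp, add_mul, Finset.sum_add_distrib]

lemma psComp_X {f : PowerSeries ℚ} (hf : constantCoeff (R := ℚ) f = 0) :
    psComp X f = f := by
  ext n
  rw [psComp, coeff_mk, Finset.sum_eq_single 1]
  · simp
  · intro k _ hk
    rw [coeff_X, if_neg hk, zero_mul]
  · intro h
    rw [Finset.mem_range, not_lt] at h
    have hn0 : n = 0 := by omega
    subst hn0
    simp [hf]

/-- `psComp · f` as a ring homomorphism, when `f` has zero constant term. -/
noncomputable def psCompHom (f : PowerSeries ℚ) (hf : constantCoeff (R := ℚ) f = 0) :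
    PowerSeries ℚ →+* PowerSeries ℚ where
  toFun g := psComp g f
  map_one' := psComp_one f
  map_mul' g h := psComp_mul hf g h
  map_zero' := by ext n; simp [psComp]
  map_add' g h := psComp_add f g h

/-- Under z = v/(1+v+v²), the Grand Motzkin generating function G becomes
(1+v+v²)/(1-v²). -/
theorem G_subst_eq
    (G : PowerSeries ℚ)
    (hG0 : constantCoeff (R := ℚ) G = 1)
    (hG : G ^ 2 * (1 - 2 * X - 3 * X ^ 2) = 1) :
    psComp G (X * (1 + X + X ^ 2)⁻¹) = (1 + X + X ^ 2) * (1 - X ^ 2)⁻¹ := by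
  set w : PowerSeries ℚ := 1 + X + X ^ 2 with hw
  have hw0 : constantCoeff (R := ℚ) w = 1 := by simp [hw]
  have hw0' : constantCoeff (R := ℚ) w ≠ 0 := by rw [hw0]; exact one_ne_zero
  set f : PowerSeries ℚ := X * w⁻¹ with hfdef
  have hf : constantCoeff (R := ℚ) f = 0 := by
    rw [hfdef, map_mul, constantCoeff_X, zero_mul]
  have hinv : w⁻¹ * w = 1 := PowerSeries.inv_mul_cancel w hw0'
  have hfw : f * w = X := by
    rw [hfdef, mul_assoc, hinv, mul_one]
  -- push psComp through the defining equation of G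
  have hA := congrArg (psCompHom f hf) hG
  have hXmap : psCompHom f hf X = f := psComp_X hf
  simp only [map_mul, map_pow, map_sub, map_one, map_ofNat, hXmap] at hA
  -- hA : (psCompHom f hf G)^2 * (1 - 2*f - 3*f^2) = 1
  set A : PowerSeries ℚ := psComp G f with hAdef
  have hAeq : A ^ 2 * (1 - 2 * f - 3 * f ^ 2) = 1 := hA
  have hw2ne : (w ^ 2 : PowerSeries ℚ) ≠ 0 := by
    intro h
    have : constantCoeff (R := ℚ) (w ^ 2) = 0 := by rw [h, map_zero]
    rw [map_pow, hw0, one_pow] at this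
    exact one_ne_zero this
  -- 1 - 2f - 3f² = (1 - X²)² (w⁻¹)²
  have hkey : 1 - 2 * f - 3 * f ^ 2 = (1 - X ^ 2) ^ 2 * (w⁻¹) ^ 2 := by
    apply mul_right_cancel₀ hw2ne
    have lhs : (1 - 2 * f - 3 * f ^ 2) * w ^ 2 = w ^ 2 - 2 * (f * w) * w - 3 * (f * w) ^ 2 := by
      ring
    have rhs : (1 - X ^ 2) ^ 2 * (w⁻¹) ^ 2 * w ^ 2 = (1 - X ^ 2) ^ 2 * (w⁻¹ * w) ^ 2 := by
      ring
    rw [lhs, rhs, hfw, hinv, one_pow, mul_one, hw]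
    ring
  -- so (A (1 - X²) w⁻¹)² = 1
  set B : PowerSeries ℚ := A * (1 - X ^ 2) * w⁻¹ with hBdef
  have hB2 : B ^ 2 = 1 := by
    rw [hBdef]
    calc (A * (1 - X ^ 2) * w⁻¹) ^ 2 = A ^ 2 * ((1 - X ^ 2) ^ 2 * (w⁻¹) ^ 2) := by ring
    _ = A ^ 2 * (1 - 2 * f - 3 * f ^ 2) := by rw [hkey]
    _ = 1 := hAeq
  have hA0 : constantCoeff (R := ℚ) A = 1 := by
    have : coeff (R := ℚ) 0 A = 1 := by
      rw [hAdef, psComp, coeff_mk]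
      simp [hG0]
    rwa [coeff_zero_eq_constantCoeff] at this
  have hB0 : constantCoeff (R := ℚ) B = 1 := by
    rw [hBdef, map_mul, map_mul, hA0, PowerSeries.constantCoeff_inv, hw0]
    simp
  have hBp1 : B + 1 ≠ 0 := by
    intro h
    have : constantCoeff (R := ℚ) (B + 1) = 0 := by rw [h, map_zero]
    rw [map_add, hB0, map_one] at this
    norm_num at this
  have hfac : (B - 1) * (B + 1) = 0 := by
    have : (B - 1) * (B + 1) = B ^ 2 - 1 := by ring
    rw [this, hB2, sub_self]
  have hB1 : B = 1 := by
    rcases mul_eq_zero.mp hfac with h | h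
    · linear_combination h
    · exact absurd h hBp1
  -- conclude
  have hx0' : constantCoeff (R := ℚ) (1 - X ^ 2) ≠ 0 := by
    simp
  rw [PowerSeries.eq_mul_inv_iff_mul_eq hx0']
  have := congrArg (· * w) hB1
  simp only [one_mul] at this
  calc A * (1 - X ^ 2) = A * (1 - X ^ 2) * (w⁻¹ * w) := by rw [hinv, mul_one]
  _ = A * (1 - X ^ 2) * w⁻¹ * w := by ring
  _ = w := by rw [← hBdef, hB1, one_mul]
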